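/- Let n ≥ 2 and let λ and μ be partitions of n with λ ⊴ μ. Then W_μ ⊆ W_λ, where for a partition ν of n, W_ν denotes the subspace of ℝ^{S_n} spanned by the indicator vectors of all left cosets g Y_P of Young subgroups Y_P of shape ν (g ∈ S_n, P an ordered set partition of Ω of shape ν). -/

import Mathlib

open scoped Pointwise

/-- `P` is an ordered set partition of `Ω = Fin n`: a list of pairwise disjoint
nonempty subsets of `Fin n` whose union is all of `Fin n`. -/
def IsOSP (n : ℕ) (P : List (Finset (Fin n))) : Prop :=
  P.Pairwise Disjoint ∧ (∀ s ∈ P, s.Nonempty) ∧ P.foldr (· ∪ ·) ∅ = Finset.univ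

/-- `l` is an integer partition of `n`: a weakly decreasing list of positive
integers summing to `n`. -/
def IsPartition (n : ℕ) (l : List ℕ) : Prop :=
  l.Pairwise (· ≥ ·) ∧ (∀ x ∈ l, 0 < x) ∧ l.sum = n

/-- The permutation `g` maps the ordered set partition `P` to `Q`, i.e. `g Pᵢ = Qᵢ`
for all `i` (in particular the lists have the same length). -/
def MapsOSP {n : ℕ} (g : Equiv.Perm (Fin n)) (P Q : List (Finset (Fin n))) : Prop :=
  List.Forall₂ (fun s t => s.image g = t) P Q

/-- Dominance order on partitions: `Dominance l m` means `l ⊴ m`. -/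
def Dominated (l m : List ℕ) : Prop :=
  ∀ j : ℕ, ((l.take j).sum ≤ (m.take j).sum)

/-- A subgroup `G ≤ S_n` is `λ`-transitive if any ordered set partition of shape `λ`
can be mapped to any other by some element of `G`. -/
def IsLamTransGroup {n : ℕ} (G : Subgroup (Equiv.Perm (Fin n))) (lam : List ℕ) : Prop :=
  ∀ P Q : List (Finset (Fin n)), IsOSP n P → IsOSP n Q →
    P.map Finset.card = lam → Q.map Finset.card = lam → ∃ g ∈ G, MapsOSP g P Q

/-- A set `D ⊆ S_n` is `λ`-transitive if there is a constant `r` such that for any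
two ordered set partitions `P, Q` of shape `λ`, exactly `r` elements of `D` map `P` to `Q`. -/
def IsLamTransSet {n : ℕ} (D : Set (Equiv.Perm (Fin n))) (lam : List ℕ) : Prop :=
  ∃ r : ℕ, ∀ P Q : List (Finset (Fin n)), IsOSP n P → IsOSP n Q →
    P.map Finset.card = lam → Q.map Finset.card = lam →
      {g ∈ D | MapsOSP g P Q}.ncard = r

/-- The Young subgroup of the ordered set partition `P`: all permutations fixing
each block of `P` setwise. -/
def YoungSubgroup {n : ℕ} (P : List (Finset (Fin n))) : Subgroup (Equiv.Perm (Fin n)) where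
  carrier := {g | ∀ s ∈ P, s.image g = s}
  one_mem' := by intro s hs; simp
  mul_mem' := by
    intro a b ha hb s hs
    have : ⇑(a * b) = ⇑a ∘ ⇑b := rfl
    rw [this, ← Finset.image_image, hb s hs, ha s hs]
  inv_mem' := by
    intro a ha s hs
    have h1 : s.image ⇑a = s := ha s hs
    conv_lhs => rw [← h1]
    rw [Finset.image_image]
    have : (⇑a⁻¹ ∘ ⇑a) = id := by
      funext x
      simp
    rw [this, Finset.image_id]

/-- `W_ν`: the subspace of `ℝ^{S_n}` spanned by the indicator vectors of all left cosets
`a • Y_P` of Young subgroups of shape `ν`. -/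
def Wspace (n : ℕ) (nu : List ℕ) : Submodule ℝ (Equiv.Perm (Fin n) → ℝ) :=
  Submodule.span ℝ
    {v | ∃ (a : Equiv.Perm (Fin n)) (P : List (Finset (Fin n))),
      IsOSP n P ∧ P.map Finset.card = nu ∧
      v = Set.indicator (a • (YoungSubgroup P : Set (Equiv.Perm (Fin n)))) (fun _ => (1 : ℝ))}

open scoped Pointwise

variable {n : ℕ}

/-- condition set: g maps fst of each pair onto snd -/
def CSet {n : ℕ} (Z : List (Finset (Fin n) × Finset (Fin n))) : Set (Equiv.Perm (Fin n)) :=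
  {g | ∀ pr ∈ Z, pr.1.image g = pr.2}

lemma CSet_perm {Z Z' : List (Finset (Fin n) × Finset (Fin n))} (h : Z.Perm Z') :
    CSet Z = CSet Z' := by
  ext g; constructor <;> intro hg pr hpr
  · exact hg pr (h.mem_iff.mpr hpr)
  · exact hg pr (h.mem_iff.mp hpr)

lemma extract_multiset {α : Type*} [DecidableEq α] (f : α → ℕ) (Z : List α) (a : ℕ)
    (s : Multiset ℕ) (h : (↑(Z.map f) : Multiset ℕ) = a ::ₘ s) :
    ∃ z Z', Z.Perm (z :: Z') ∧ f z = a ∧ (↑(Z'.map f) : Multiset ℕ) = s := by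
  have ha : a ∈ Z.map f := by
    have : a ∈ (↑(Z.map f) : Multiset ℕ) := by rw [h]; exact Multiset.mem_cons_self _ _
    simpa using this
  obtain ⟨z, hz, hfz⟩ := List.mem_map.mp ha
  refine ⟨z, Z.erase z, List.perm_cons_erase hz, hfz, ?_⟩
  have hperm : (Z.map f).Perm (f z :: (Z.erase z).map f) :=
    (List.perm_cons_erase hz).map f
  have : (↑(Z.map f) : Multiset ℕ) = f z ::ₘ ↑((Z.erase z).map f) := by
    exact_mod_cast Multiset.coe_eq_coe.mpr hperm
  rw [h, hfz] at this
  exact (Multiset.cons_inj_right a).mp this.symm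

lemma exists_perm_map {α : Type*} [DecidableEq α] (f : α → ℕ) :
    ∀ (l : List ℕ) (Z : List α), (↑(Z.map f) : Multiset ℕ) = ↑l →
      ∃ Z', Z.Perm Z' ∧ Z'.map f = l := by
  intro l
  induction l with
  | nil => intro Z h; refine ⟨Z, List.Perm.refl _, ?_⟩
           have : (Z.map f).Perm [] := Multiset.coe_eq_coe.mp h
           simpa using this.eq_nil
  | cons a t ih =>
      intro Z h
      obtain ⟨z, Z1, hperm, hfz, hrest⟩ := extract_multiset f Z a ↑t (by simpa using h)
      obtain ⟨Z1', hp1, hmap⟩ := ih Z1 hrest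
      exact ⟨z :: Z1', hperm.trans (hp1.cons z), by simp [hfz, hmap]⟩

lemma mem_foldr_union {P : List (Finset (Fin n))} {a : Fin n} :
    a ∈ P.foldr (· ∪ ·) ∅ ↔ ∃ s ∈ P, a ∈ s := by
  induction P with
  | nil => simp
  | cons b t ih => simp [ih]

lemma isOSP_perm {P P' : List (Finset (Fin n))} (h : P.Perm P') (hP : IsOSP n P) :
    IsOSP n P' := by
  obtain ⟨h1, h2, h3⟩ := hP
  refine ⟨(List.Perm.pairwise_iff (fun hd => Disjoint.symm hd) h).mp h1,
    fun s hs => h2 s (h.mem_iff.mpr hs), ?_⟩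
  have : ∀ a : Fin n, a ∈ P'.foldr (· ∪ ·) ∅ := by
    intro a
    have : a ∈ P.foldr (· ∪ ·) ∅ := by rw [h3]; exact Finset.mem_univ a
    rw [mem_foldr_union] at this ⊢
    obtain ⟨s, hs, has⟩ := this
    exact ⟨s, h.mem_iff.mp hs, has⟩
  exact Finset.eq_univ_iff_forall.mpr this

/-- membership of generator-like indicators in Wspace -/
lemma indicator_CSet_mem (lam : List ℕ)
    (Z : List (Finset (Fin n) × Finset (Fin n)))
    (hdisj : (Z.map Prod.fst).Pairwise Disjoint)
    (hne : ∀ pr ∈ Z, pr.1.Nonempty)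
    (hcov : ∀ a : Fin n, ∃ pr ∈ Z, a ∈ pr.1)
    (hcard : (↑(Z.map (fun pr => pr.1.card)) : Multiset ℕ) = (↑lam : Multiset ℕ)) :
    Set.indicator (CSet Z) (fun _ => (1 : ℝ)) ∈ Wspace n lam := by
  obtain ⟨Z', hperm, hmap⟩ := exists_perm_map (fun pr => pr.1.card) lam Z hcard
  rw [CSet_perm hperm]
  -- transport hypotheses
  have hdisj' : (Z'.map Prod.fst).Pairwise Disjoint :=
    (List.Perm.pairwise_iff (fun hd => Disjoint.symm hd) (hperm.map Prod.fst)).mp hdisj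
  have hne' : ∀ pr ∈ Z', pr.1.Nonempty := fun pr hpr => hne pr (hperm.mem_iff.mpr hpr)
  have hcov' : ∀ a : Fin n, ∃ pr ∈ Z', a ∈ pr.1 := by
    intro a; obtain ⟨pr, hpr, ha⟩ := hcov a; exact ⟨pr, hperm.mem_iff.mp hpr, ha⟩
  set P : List (Finset (Fin n)) := Z'.map Prod.fst with hPdef
  have hOSP : IsOSP n P := by
    refine ⟨hdisj', ?_, ?_⟩
    · intro s hs
      obtain ⟨pr, hpr, rfl⟩ := List.mem_map.mp hs
      exact hne' pr hpr
    · refine Finset.eq_univ_iff_forall.mpr fun a => ?_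
      rw [mem_foldr_union]
      obtain ⟨pr, hpr, ha⟩ := hcov' a
      exact ⟨pr.1, List.mem_map_of_mem hpr, ha⟩
  have hcards : P.map Finset.card = lam := by
    rw [hPdef, List.map_map]; exact hmap
  by_cases hE : (CSet Z' : Set (Equiv.Perm (Fin n))).Nonempty
  · obtain ⟨g0, hg0⟩ := hE
    have hmem : ∀ h : Equiv.Perm (Fin n), h ∈ YoungSubgroup P ↔ ∀ s ∈ P, s.image ⇑h = s :=
      fun h => Iff.rfl
    have hset : CSet Z' = g0 • (YoungSubgroup P : Set (Equiv.Perm (Fin n))) := by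
      ext g
      rw [Set.mem_smul_set_iff_inv_smul_mem, smul_eq_mul, SetLike.mem_coe, hmem]
      constructor
      · intro hg s hs
        obtain ⟨pr, hpr, rfl⟩ := List.mem_map.mp hs
        have h1 : pr.1.image ⇑g = pr.2 := hg pr hpr
        have h2 : pr.1.image ⇑g0 = pr.2 := hg0 pr hpr
        rw [Equiv.Perm.coe_mul, ← Finset.image_image, h1, ← h2, Finset.image_image]
        ext x; simp
      · intro hg pr hpr
        have h2 : pr.1.image ⇑g0 = pr.2 := hg0 pr hpr
        have h1 : pr.1.image ⇑(g0⁻¹ * g) = pr.1 := hg pr.1 (List.mem_map_of_mem hpr)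
        have hcomp : ⇑g = ⇑g0 ∘ ⇑(g0⁻¹ * g) := by funext x; simp
        rw [hcomp, ← Finset.image_image, h1, h2]
    rw [hset]
    exact Submodule.subset_span ⟨g0, P, hOSP, hcards, rfl⟩
  · rw [Set.not_nonempty_iff_eq_empty] at hE
    rw [hE]
    rw [Set.indicator_empty]
    exact (Wspace n lam).zero_mem

lemma smul_mem_cancel {W : Submodule ℝ (Equiv.Perm (Fin n) → ℝ)} {c : ℝ} (hc : c ≠ 0)
    {v : Equiv.Perm (Fin n) → ℝ} (h : c • v ∈ W) : v ∈ W := by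
  have := W.smul_mem c⁻¹ h
  rwa [smul_smul, inv_mul_cancel₀ hc, one_smul] at this

lemma core_move (lam : List ℕ) (A A' B B' : Finset (Fin n))
    (O : List (Finset (Fin n) × Finset (Fin n)))
    (hdisj : (((A, A') :: (B, B') :: O).map Prod.fst).Pairwise Disjoint)
    (hcov : ∀ a : Fin n, ∃ pr ∈ ((A, A') :: (B, B') :: O), a ∈ pr.1)
    (hdisj' : (((A, A') :: (B, B') :: O).map Prod.snd).Pairwise Disjoint)
    (hcov' : ∀ a : Fin n, ∃ pr ∈ ((A, A') :: (B, B') :: O), a ∈ pr.2)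
    (hOne : ∀ pr ∈ O, pr.1.Nonempty)
    (hAA' : A.card = A'.card)
    (hpq : B.card + 2 ≤ A.card)
    (hlam : (↑lam : Multiset ℕ)
      = (A.card - 1) ::ₘ (B.card + 1) ::ₘ ↑(O.map (fun pr => pr.1.card))) :
    Set.indicator (CSet ((A, A') :: (B, B') :: O)) (fun _ => (1 : ℝ)) ∈ Wspace n lam := by
  classical
  set p := A.card with hp
  set q := B.card with hq
  -- unpack disjointness
  rw [List.map_cons, List.map_cons, List.pairwise_cons, List.pairwise_cons] at hdisj hdisj'
  obtain ⟨hdA, hdB, hdO⟩ := hdisj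
  obtain ⟨hdA', hdB', hdO'⟩ := hdisj'
  have hAB : Disjoint A B := hdA B (List.mem_cons_self)
  have hA'B' : Disjoint A' B' := hdA' B' (List.mem_cons_self)
  have hAO : ∀ pr ∈ O, Disjoint A pr.1 := fun pr hpr =>
    hdA pr.1 (List.mem_cons_of_mem _ (List.mem_map_of_mem hpr))
  have hBO : ∀ pr ∈ O, Disjoint B pr.1 := fun pr hpr =>
    hdB pr.1 (List.mem_map_of_mem hpr)
  have hA'O : ∀ pr ∈ O, Disjoint A' pr.2 := fun pr hpr =>
    hdA' pr.2 (List.mem_cons_of_mem _ (List.mem_map_of_mem hpr))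
  have hB'O : ∀ pr ∈ O, Disjoint B' pr.2 := fun pr hpr =>
    hdB' pr.2 (List.mem_map_of_mem hpr)
  -- key1 : image of A ∪ B
  have key1 : ∀ g : Equiv.Perm (Fin n), g ∈ CSet O → (A ∪ B).image ⇑g = A' ∪ B' := by
    intro g hg
    apply Finset.Subset.antisymm
    · intro y hy
      obtain ⟨x, hx, rfl⟩ := Finset.mem_image.mp hy
      obtain ⟨pr, hpr, hmem⟩ := hcov' (g x)
      simp only [List.mem_cons] at hpr
      rcases hpr with rfl | rfl | h
      · exact Finset.mem_union_left _ hmem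
      · exact Finset.mem_union_right _ hmem
      · exfalso
        have : g x ∈ pr.1.image ⇑g := by rw [hg pr h]; exact hmem
        obtain ⟨z, hz, hgz⟩ := Finset.mem_image.mp this
        have hzx : z = x := g.injective hgz
        subst hzx
        rcases Finset.mem_union.mp hx with h1 | h1
        · exact Finset.disjoint_left.mp (hAO pr h) h1 hz
        · exact Finset.disjoint_left.mp (hBO pr h) h1 hz
    · intro y hy
      obtain ⟨pr, hpr, hmem⟩ := hcov (g⁻¹ y)
      simp only [List.mem_cons] at hpr
      rcases hpr with rfl | rfl | h
      · exact Finset.mem_image.mpr ⟨g⁻¹ y, Finset.mem_union_left _ hmem, by simp⟩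
      · exact Finset.mem_image.mpr ⟨g⁻¹ y, Finset.mem_union_right _ hmem, by simp⟩
      · exfalso
        have : g (g⁻¹ y) ∈ pr.1.image ⇑g := Finset.mem_image_of_mem _ hmem
        rw [hg pr h] at this
        rw [show g (g⁻¹ y) = y by simp] at this
        rcases Finset.mem_union.mp hy with h1 | h1
        · exact Finset.disjoint_left.mp (hA'O pr h) h1 this
        · exact Finset.disjoint_left.mp (hB'O pr h) h1 this
  have hBB' : ∀ g : Equiv.Perm (Fin n), g ∈ CSet O → B'.card = q := by
    intro g hg
    have h1 : ((A ∪ B).image ⇑g).card = p + q :=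
      by rw [Finset.card_image_of_injective _ g.injective, Finset.card_union_of_disjoint hAB]
    rw [key1 g hg, Finset.card_union_of_disjoint hA'B', ← hAA'] at h1
    omega
  -- definitions
  set E : ℕ → (Equiv.Perm (Fin n) → ℝ) := fun s =>
    Set.indicator {g : Equiv.Perm (Fin n) | g ∈ CSet O ∧ (A.image ⇑g ∩ B').card = s}
      (fun _ => (1 : ℝ)) with hE
  set Cs : ℕ → Finset (Finset (Fin n)) := fun s =>
    ((A' ∪ B').powersetCard (p - 1)).filter (fun C' => (C' ∩ B').card = s) with hCs
  set F : Fin n → Finset (Fin n) → (Equiv.Perm (Fin n) → ℝ) := fun x C' =>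
    Set.indicator (CSet ((A.erase x, C') :: (insert x B, (A' ∪ B') \ C') :: O))
      (fun _ => (1 : ℝ)) with hF
  -- each F is in Wspace lam
  have hFmem : ∀ x ∈ A, ∀ C' : Finset (Fin n), F x C' ∈ Wspace n lam := by
    intro x hx C'
    have hxB : x ∉ B := fun hxB => Finset.disjoint_left.mp hAB hx hxB
    apply indicator_CSet_mem lam
    · rw [List.map_cons, List.map_cons]
      refine List.Pairwise.cons ?_ (List.Pairwise.cons ?_ hdO)
      · intro y hy
        rcases List.mem_cons.mp hy with rfl | h
        · refine Finset.disjoint_left.mpr fun a ha hb => ?_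
          rcases Finset.mem_insert.mp hb with rfl | hb
          · exact (Finset.notMem_erase a A) ha
          · exact Finset.disjoint_left.mp hAB (Finset.mem_of_mem_erase ha) hb
        · obtain ⟨pr, hpr, rfl⟩ := List.mem_map.mp h
          exact Finset.disjoint_of_subset_left (Finset.erase_subset _ _) (hAO pr hpr)
      · intro y hy
        obtain ⟨pr, hpr, rfl⟩ := List.mem_map.mp hy
        refine Finset.disjoint_left.mpr fun a ha hb => ?_
        rcases Finset.mem_insert.mp ha with rfl | ha
        · exact Finset.disjoint_left.mp (hAO pr hpr) hx hb
        · exact Finset.disjoint_left.mp (hBO pr hpr) ha hb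
    · intro pr hpr
      rcases List.mem_cons.mp hpr with rfl | hpr
      · rw [← Finset.card_pos, Finset.card_erase_of_mem hx]
        omega
      rcases List.mem_cons.mp hpr with rfl | hpr
      · exact ⟨x, Finset.mem_insert_self _ _⟩
      · exact hOne pr hpr
    · intro a
      obtain ⟨pr, hpr, hmem⟩ := hcov a
      simp only [List.mem_cons] at hpr
      rcases hpr with rfl | rfl | h
      · by_cases hax : a = x
        · exact ⟨(insert x B, (A' ∪ B') \ C'), by simp, by simp [hax]⟩
        · exact ⟨(A.erase x, C'), by simp, Finset.mem_erase.mpr ⟨hax, hmem⟩⟩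
      · exact ⟨(insert x B, (A' ∪ B') \ C'), by simp, Finset.mem_insert_of_mem hmem⟩
      · exact ⟨pr, by simp [h], hmem⟩
    · rw [List.map_cons, List.map_cons]
      have : (A.erase x).card = p - 1 := Finset.card_erase_of_mem hx
      have h2 : (insert x B).card = q + 1 := Finset.card_insert_of_notMem hxB
      rw [hlam]
      push_cast [this, h2]
      rfl
  -- helper : insert x B = (A ∪ B) \ (A.erase x)
  have hsplit : ∀ x ∈ A, insert x B = (A ∪ B) \ (A.erase x) := by
    intro x hx
    ext a
    simp only [Finset.mem_insert, Finset.mem_sdiff, Finset.mem_union, Finset.mem_erase]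
    constructor
    · rintro (rfl | ha)
      · exact ⟨Or.inl hx, fun h => h.1 rfl⟩
      · exact ⟨Or.inr ha, fun h => Finset.disjoint_left.mp hAB h.2 ha⟩
    · rintro ⟨h1 | h1, h2⟩
      · by_cases hax : a = x
        · exact Or.inl hax
        · exact absurd ⟨hax, h1⟩ h2
      · exact Or.inr h1
  -- the key identity
  have hkey : ∀ s : ℕ,
      (∑ x ∈ A, ∑ C' ∈ Cs s, F x C')
        = ((s + 1 : ℕ) : ℝ) • E (s + 1) + ((p - s : ℕ) : ℝ) • E s := by
    intro s
    funext g
    simp only [Finset.sum_apply, Pi.add_apply, Pi.smul_apply, smul_eq_mul]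
    by_cases hgO : g ∈ CSet O
    · set σ := (A.image ⇑g ∩ B').card with hσ
      have hU : (A ∪ B).image ⇑g = A' ∪ B' := key1 g hgO
      have hEgen : ∀ t : ℕ, E t g = if σ = t then 1 else 0 := by
        intro t
        by_cases h : σ = t
        · rw [if_pos h]
          exact Set.indicator_of_mem (show g ∈ {g : Equiv.Perm (Fin n) |
            g ∈ CSet O ∧ (A.image ⇑g ∩ B').card = t} from ⟨hgO, h⟩) _
        · rw [if_neg h]
          exact Set.indicator_of_notMem (fun hm => h hm.2) _
      have hEs : E s g = if σ = s then 1 else 0 := hEgen s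
      have hEs1 : E (s + 1) g = if σ = s + 1 then 1 else 0 := hEgen (s + 1)
      have hinner : ∀ x ∈ A, (∑ C' ∈ Cs s, F x C' g)
          = if g x ∈ B' then (if σ - 1 = s then (1:ℝ) else 0)
            else (if σ = s then (1:ℝ) else 0) := by
        intro x hx
        have hFg : ∀ C' ∈ Cs s, F x C' g
            = if C' = (A.erase x).image ⇑g then (1:ℝ) else 0 := by
          intro C' _
          by_cases hcc : C' = (A.erase x).image ⇑g
          · rw [if_pos hcc]
            apply Set.indicator_of_mem
            intro pr hpr
            rcases List.mem_cons.mp hpr with rfl | hpr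
            · exact hcc.symm
            rcases List.mem_cons.mp hpr with rfl | hpr
            · show (insert x B).image ⇑g = (A' ∪ B') \ C'
              rw [hsplit x hx, Finset.image_sdiff _ _ g.injective, hU, hcc]
            · exact hgO pr hpr
          · rw [if_neg hcc]
            apply Set.indicator_of_notMem
            intro hmem
            exact hcc ((hmem (A.erase x, C') (List.mem_cons_self)).symm)
        rw [Finset.sum_congr rfl hFg, Finset.sum_ite_eq' (Cs s)]
        have hscard : ((A.erase x).image ⇑g ∩ B').card
            = if g x ∈ B' then σ - 1 else σ := by
          have him : (A.erase x).image ⇑g = (A.image ⇑g).erase (g x) :=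
            Finset.image_erase g.injective A x
          have hie : (A.image ⇑g).erase (g x) ∩ B' = (A.image ⇑g ∩ B').erase (g x) := by
            ext a
            simp only [Finset.mem_erase, Finset.mem_inter]
            tauto
          rw [him, hie]
          by_cases hgx : g x ∈ B'
          · rw [if_pos hgx]
            exact Finset.card_erase_of_mem
              (Finset.mem_inter.mpr ⟨Finset.mem_image_of_mem _ hx, hgx⟩)
          · rw [if_neg hgx]
            rw [Finset.erase_eq_of_notMem (fun hm => hgx (Finset.mem_inter.mp hm).2)]
        have hmemCs : (A.erase x).image ⇑g ∈ Cs s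
            ↔ ((A.erase x).image ⇑g ∩ B').card = s := by
          constructor
          · intro h; exact (Finset.mem_filter.mp h).2
          · intro h
            refine Finset.mem_filter.mpr ⟨Finset.mem_powersetCard.mpr ⟨?_, ?_⟩, h⟩
            · calc (A.erase x).image ⇑g ⊆ (A ∪ B).image ⇑g :=
                    Finset.image_subset_image ((Finset.erase_subset _ _).trans
                      Finset.subset_union_left)
                _ = A' ∪ B' := hU
            · rw [Finset.card_image_of_injective _ g.injective,
                Finset.card_erase_of_mem hx]
        by_cases hgx : g x ∈ B'
        · rw [if_pos hgx]
          rw [if_pos hgx] at hscard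
          by_cases hcond : σ - 1 = s
          · rw [if_pos hcond, if_pos (hmemCs.mpr (by rw [hscard]; exact hcond))]
          · rw [if_neg hcond, if_neg (fun hm => hcond (by rw [← hscard]; exact hmemCs.mp hm))]
        · rw [if_neg hgx]
          rw [if_neg hgx] at hscard
          by_cases hcond : σ = s
          · rw [if_pos hcond, if_pos (hmemCs.mpr (by rw [hscard]; exact hcond))]
          · rw [if_neg hcond, if_neg (fun hm => hcond (by rw [← hscard]; exact hmemCs.mp hm))]
      rw [Finset.sum_congr rfl hinner, Finset.sum_ite, Finset.sum_const, Finset.sum_const]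
      have hfil : (A.filter (fun x => g x ∈ B')).card = σ := by
        have him : (A.filter (fun x => g x ∈ B')).image ⇑g = A.image ⇑g ∩ B' := by
          ext y
          simp only [Finset.mem_image, Finset.mem_filter, Finset.mem_inter]
          constructor
          · rintro ⟨x, ⟨hx, hgx⟩, rfl⟩
            exact ⟨⟨x, hx, rfl⟩, hgx⟩
          · rintro ⟨⟨x, hx, rfl⟩, hy⟩
            exact ⟨x, ⟨hx, hy⟩, rfl⟩
        rw [hσ, ← him, Finset.card_image_of_injective _ g.injective]
      have hfil2 : (A.filter (fun a => ¬ (fun x => g x ∈ B') a)).card = p - σ := by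
        have h := Finset.card_filter_add_card_filter_not
          (s := A) (p := fun x => g x ∈ B')
        rw [hfil] at h
        exact Nat.eq_sub_of_add_eq' h
      rw [hfil, hfil2, hEs, hEs1]
      simp only [nsmul_eq_mul]
      by_cases h1 : σ = s + 1
      · rw [if_pos h1, if_pos (show σ - 1 = s by omega), if_neg (show ¬ σ = s by omega),
          h1]
        push_cast; ring
      · by_cases h2 : σ = s
        · rw [if_neg h1, if_pos h2]
          by_cases h3 : σ - 1 = s
          · have hσ0 : σ = 0 := by omega
            rw [if_pos h3, hσ0, ← h2, hσ0]
            push_cast; ring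
          · rw [if_neg h3, h2]
            push_cast; ring
        · rw [if_neg h1, if_neg h2, if_neg (show ¬ σ - 1 = s by omega)]
          push_cast; ring
    · have hFz : ∀ x ∈ A, ∀ C' ∈ Cs s, F x C' g = 0 := by
        intro x hx C' hC'
        apply Set.indicator_of_notMem
        intro hgmem
        exact hgO (fun pr hpr => hgmem pr (by simp [List.mem_cons, hpr]))
      rw [Finset.sum_congr rfl (fun x hx => Finset.sum_congr rfl (hFz x hx))]
      have hE1 : E (s+1) g = 0 := Set.indicator_of_notMem (fun h => hgO h.1) _
      have hE2 : E s g = 0 := Set.indicator_of_notMem (fun h => hgO h.1) _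
      rw [hE1, hE2]; simp
  -- downward induction : all E s are in Wspace lam
  have hEmem : ∀ j s : ℕ, q < s + j → E s ∈ Wspace n lam := by
    intro j
    induction j with
    | zero =>
        intro s hs
        have hempty : {g : Equiv.Perm (Fin n) |
            g ∈ CSet O ∧ (A.image ⇑g ∩ B').card = s} = ∅ := by
          ext g
          simp only [Set.mem_setOf_eq, Set.mem_empty_iff_false, iff_false, not_and]
          intro hgO hcard
          have h1 : (A.image ⇑g ∩ B').card ≤ B'.card :=
            Finset.card_le_card Finset.inter_subset_right
          rw [hBB' g hgO] at h1
          omega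
        have : E s = 0 := by
          rw [hE]
          simp only
          rw [hempty]
          funext g
          simp
        rw [this]
        exact (Wspace n lam).zero_mem
    | succ j ih =>
        intro s hs
        by_cases hqs : q < s + j
        · exact ih s hqs
        · have hsq : s ≤ q := by omega
          have hc : ((p - s : ℕ) : ℝ) ≠ 0 := by
            have h2 : 0 < p - s := by omega
            exact_mod_cast h2.ne'
          apply smul_mem_cancel hc
          have heq : ((p - s : ℕ) : ℝ) • E s
              = (∑ x ∈ A, ∑ C' ∈ Cs s, F x C') - ((s + 1 : ℕ) : ℝ) • E (s + 1) := by
            rw [hkey s, add_sub_cancel_left]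
          rw [heq]
          exact Submodule.sub_mem _
            (Submodule.sum_mem _ fun x hx => Submodule.sum_mem _ fun C' _ => hFmem x hx C')
            (Submodule.smul_mem _ _ (ih (s + 1) (by omega)))
  have hfinal : CSet ((A, A') :: (B, B') :: O)
      = {g : Equiv.Perm (Fin n) | g ∈ CSet O ∧ (A.image ⇑g ∩ B').card = 0} := by
    ext g
    simp only [Set.mem_setOf_eq]
    constructor
    · intro hg
      have hgA : A.image ⇑g = A' := hg (A, A') (List.mem_cons_self)
      have hgO : g ∈ CSet O := fun pr hpr => hg pr (by simp [hpr])
      refine ⟨hgO, ?_⟩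
      rw [hgA, Finset.card_eq_zero, ← Finset.disjoint_iff_inter_eq_empty]
      exact hA'B'
    · rintro ⟨hgO, hcard⟩
      have hU := key1 g hgO
      have hsubU : A.image ⇑g ⊆ A' ∪ B' := by
        rw [← hU]; exact Finset.image_subset_image Finset.subset_union_left
      have hinterE : A.image ⇑g ∩ B' = ∅ := Finset.card_eq_zero.mp hcard
      have hgA : A.image ⇑g = A' := by
        apply Finset.eq_of_subset_of_card_le
        · intro y hy
          rcases Finset.mem_union.mp (hsubU hy) with h | h
          · exact h
          · exfalso
            have hy2 : y ∈ A.image ⇑g ∩ B' := Finset.mem_inter.mpr ⟨hy, h⟩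
            rw [hinterE] at hy2
            exact Finset.notMem_empty y hy2
        · rw [Finset.card_image_of_injective _ g.injective, ← hAA']
      have hgB : B.image ⇑g = B' := by
        have h1 : B = (A ∪ B) \ A := (Finset.union_sdiff_cancel_left hAB).symm
        rw [h1, Finset.image_sdiff _ _ g.injective, hU, hgA,
          Finset.union_sdiff_cancel_left hA'B']
      intro pr hpr
      rcases List.mem_cons.mp hpr with rfl | hpr
      · exact hgA
      rcases List.mem_cons.mp hpr with rfl | hpr
      · exact hgB
      · exact hgO pr hpr
  rw [hfinal]
  exact hEmem (q + 1) 0 (by omega)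

def Sp (l : List ℕ) (k : ℕ) : ℕ := (l.take k).sum

def Mval (n : ℕ) (l : List ℕ) : ℕ := ∑ j ∈ Finset.range (n + 1), Sp l j

lemma Sp_succ (l : List ℕ) (k : ℕ) : Sp l (k + 1) = Sp l k + l.getD k 0 := by
  induction l generalizing k with
  | nil => simp [Sp]
  | cons x t ih =>
      cases k with
      | zero => simp [Sp]
      | succ k =>
          simp only [Sp, List.take_succ_cons, List.sum_cons, List.getD_cons_succ]
          rw [show (t.take (k+1)).sum = Sp t (k+1) from rfl, ih k]
          show x + (Sp t k + t.getD k 0) = x + (t.take k).sum + t.getD k 0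
          rw [show (t.take k).sum = Sp t k from rfl]
          omega

lemma Sp_zero (l : List ℕ) : Sp l 0 = 0 := rfl

lemma Sp_mono (l : List ℕ) {k m : ℕ} (h : k ≤ m) : Sp l k ≤ Sp l m := by
  induction m with
  | zero => simp_all [Sp_zero]
  | succ m ih =>
      rcases Nat.lt_or_ge k (m+1) with h1 | h1
      · exact le_trans (ih (by omega)) (by rw [Sp_succ]; omega)
      · have : k = m + 1 := by omega
        subst this; exact le_refl _

lemma Sp_of_length_le (l : List ℕ) {k : ℕ} (h : l.length ≤ k) : Sp l k = l.sum := by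
  unfold Sp; rw [List.take_of_length_le h]

lemma Sp_le_sum (l : List ℕ) (k : ℕ) : Sp l k ≤ l.sum := by
  rcases Nat.le_total l.length k with h | h
  · rw [Sp_of_length_le l h]
  · calc Sp l k ≤ Sp l l.length := Sp_mono l h
      _ = l.sum := Sp_of_length_le l (le_refl _)

lemma getD_eq_zero_of_length_le {l : List ℕ} {k : ℕ} (h : l.length ≤ k) : l.getD k 0 = 0 := by
  induction l generalizing k with
  | nil => simp
  | cons x t ih =>
      cases k with
      | zero => simp at h
      | succ k => simp only [List.getD_cons_succ]; exact ih (by simpa using h)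

lemma getD_pos {l : List ℕ} (hl : ∀ x ∈ l, 0 < x) {k : ℕ} (h : k < l.length) :
    0 < l.getD k 0 := by
  induction l generalizing k with
  | nil => simp at h
  | cons x t ih =>
      cases k with
      | zero => exact hl x (List.mem_cons_self)
      | succ k =>
          simp only [List.getD_cons_succ]
          exact ih (fun y hy => hl y (List.mem_cons_of_mem _ hy)) (by simpa using h)

lemma getD_antitone {l : List ℕ} (hl : l.Pairwise (· ≥ ·)) {i j : ℕ} (h : i ≤ j) :
    l.getD j 0 ≤ l.getD i 0 := by
  induction l generalizing i j with
  | nil => simp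
  | cons x t ih =>
      cases i with
      | zero =>
          cases j with
          | zero => exact le_refl _
          | succ j =>
              simp only [List.getD_cons_succ, List.getD_cons_zero]
              rcases Nat.lt_or_ge j t.length with hj | hj
              · have : t.getD j 0 ∈ t := by
                  rw [List.getD_eq_getElem _ _ hj]
                  exact List.getElem_mem _
                exact (List.pairwise_cons.mp hl).1 _ this
              · rw [getD_eq_zero_of_length_le hj]; exact Nat.zero_le _
      | succ i =>
          cases j with
          | zero => omega
          | succ j =>
              simp only [List.getD_cons_succ]
              exact ih (List.pairwise_cons.mp hl).2 (by omega)

lemma length_le_sum {l : List ℕ} (hl : ∀ x ∈ l, 0 < x) : l.length ≤ l.sum := by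
  induction l with
  | nil => simp
  | cons x t ih =>
      simp only [List.length_cons, List.sum_cons]
      have h1 : 0 < x := hl x (List.mem_cons_self)
      have h2 := ih (fun y hy => hl y (List.mem_cons_of_mem _ hy))
      omega

lemma eq_of_getD_eq : ∀ (l m : List ℕ), (∀ x ∈ l, 0 < x) → (∀ x ∈ m, 0 < x) →
    (∀ k, l.getD k 0 = m.getD k 0) → l = m := by
  intro l
  induction l with
  | nil =>
      intro m _ hm h
      cases m with
      | nil => rfl
      | cons y t =>
          exfalso
          have h0 := h 0
          simp only [List.getD_cons_zero, List.getD_nil] at h0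
          have hy := hm y (List.mem_cons_self)
          omega
  | cons x t ih =>
      intro m hl hm h
      cases m with
      | nil =>
          exfalso
          have h0 := h 0
          simp only [List.getD_cons_zero, List.getD_nil] at h0
          have hx := hl x (List.mem_cons_self)
          omega
      | cons y s =>
          have h0 := h 0
          simp only [List.getD_cons_zero] at h0
          subst h0
          rw [ih s (fun z hz => hl z (List.mem_cons_of_mem _ hz))
            (fun z hz => hm z (List.mem_cons_of_mem _ hz))
            (fun k => by have := h (k+1); simpa using this)]

lemma getD_set (l : List ℕ) (i k v : ℕ) :
    (l.set i v).getD k 0 = if k = i ∧ i < l.length then v else l.getD k 0 := by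
  induction l generalizing i k with
  | nil => simp
  | cons x t ih =>
      cases i with
      | zero =>
          cases k with
          | zero => simp
          | succ k => simp
      | succ i =>
          cases k with
          | zero => simp
          | succ k =>
              simp only [List.set_cons_succ, List.getD_cons_succ, ih, List.length_cons]
              congr 1
              simp only [eq_iff_iff]
              omega

lemma Sp_eq_sum_range (l : List ℕ) (k : ℕ) :
    Sp l k = ∑ j ∈ Finset.range k, l.getD j 0 := by
  induction k with
  | zero => simp [Sp_zero]
  | succ k ih => rw [Sp_succ, Finset.sum_range_succ, ih]

lemma Sp_set {l : List ℕ} {i k : ℕ} (v : ℕ) (hi : i < l.length) (hik : i < k) :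
    Sp (l.set i v) k + l.getD i 0 = Sp l k + v := by
  rw [Sp_eq_sum_range, Sp_eq_sum_range]
  have hmem : i ∈ Finset.range k := Finset.mem_range.mpr hik
  rw [← Finset.add_sum_erase _ _ hmem, ← Finset.add_sum_erase _ _ hmem]
  have h1 : (l.set i v).getD i 0 = v := by rw [getD_set]; simp [hi]
  have h2 : ∀ j ∈ (Finset.range k).erase i, (l.set i v).getD j 0 = l.getD j 0 := by
    intro j hj
    rw [getD_set]
    simp [(Finset.mem_erase.mp hj).1]
  rw [h1, Finset.sum_congr rfl h2]
  ring

lemma Sp_set_of_le {l : List ℕ} {i k : ℕ} (v : ℕ) (hik : k ≤ i) :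
    Sp (l.set i v) k = Sp l k := by
  rw [Sp_eq_sum_range, Sp_eq_sum_range]
  apply Finset.sum_congr rfl
  intro j hj
  rw [getD_set]
  have : j ≠ i := by have := Finset.mem_range.mp hj; omega
  simp [this]

lemma set_multiset : ∀ (l : List ℕ) (k : ℕ), k < l.length → ∀ v : ℕ,
    ∃ rest : Multiset ℕ, (↑l : Multiset ℕ) = l.getD k 0 ::ₘ rest ∧
      (↑(l.set k v) : Multiset ℕ) = v ::ₘ rest := by
  intro l
  induction l with
  | nil => intro k h; simp at h
  | cons x t ih =>
      intro k hk v
      cases k with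
      | zero => exact ⟨↑t, by simp, by simp⟩
      | succ k =>
          obtain ⟨r, h1, h2⟩ := ih k (by simpa using hk) v
          refine ⟨x ::ₘ r, ?_, ?_⟩
          · simp only [List.getD_cons_succ]
            rw [← Multiset.cons_coe, h1, Multiset.cons_swap]
          · rw [List.set_cons_succ, ← Multiset.cons_coe, h2, Multiset.cons_swap]

lemma set_set_multiset : ∀ (l : List ℕ) (a b : ℕ), a ≠ b → a < l.length → b < l.length →
    ∀ u v : ℕ, ∃ rest : Multiset ℕ,
      (↑l : Multiset ℕ) = l.getD a 0 ::ₘ l.getD b 0 ::ₘ rest ∧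
      (↑((l.set a u).set b v) : Multiset ℕ) = u ::ₘ v ::ₘ rest := by
  intro l
  induction l with
  | nil => intro a b _ ha; simp at ha
  | cons x t ih =>
      intro a b hab ha hb u v
      match a, b with
      | 0, 0 => exact absurd rfl hab
      | 0, b+1 =>
          obtain ⟨r, h1, h2⟩ := set_multiset t b (by simpa using hb) v
          refine ⟨r, ?_, ?_⟩
          · simp only [List.getD_cons_zero, List.getD_cons_succ]
            rw [← Multiset.cons_coe, h1]
          · rw [List.set_cons_zero, List.set_cons_succ, ← Multiset.cons_coe, h2]
      | a+1, 0 =>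
          obtain ⟨r, h1, h2⟩ := set_multiset t a (by simpa using ha) u
          refine ⟨r, ?_, ?_⟩
          · simp only [List.getD_cons_succ, List.getD_cons_zero]
            rw [← Multiset.cons_coe, h1, Multiset.cons_swap]
          · rw [List.set_cons_succ, List.set_cons_zero, ← Multiset.cons_coe, h2,
              Multiset.cons_swap]
      | a+1, b+1 =>
          obtain ⟨r, h1, h2⟩ := ih a b (by omega) (by simpa using ha) (by simpa using hb) u v
          refine ⟨x ::ₘ r, ?_, ?_⟩
          · simp only [List.getD_cons_succ]
            rw [← Multiset.cons_coe, h1, Multiset.cons_swap x, Multiset.cons_swap x]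
          · rw [List.set_cons_succ, List.set_cons_succ, ← Multiset.cons_coe, h2,
              Multiset.cons_swap x u, Multiset.cons_swap x v]

lemma snoc_multiset (l : List ℕ) (v : ℕ) :
    (↑(l ++ [v]) : Multiset ℕ) = v ::ₘ ↑l := by
  induction l with
  | nil => rfl
  | cons x t ih =>
      show ((x :: (t ++ [v]) : List ℕ) : Multiset ℕ) = _
      rw [← Multiset.cons_coe, ih, Multiset.cons_swap, Multiset.cons_coe]

lemma getD_snoc (l : List ℕ) (v k : ℕ) :
    (l ++ [v]).getD k 0 = if k = l.length then v else l.getD k 0 := by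
  induction l generalizing k with
  | nil => cases k <;> simp
  | cons x t ih =>
      cases k with
      | zero => simp
      | succ k =>
          simp only [List.cons_append, List.getD_cons_succ, ih k, List.length_cons]
          congr 1
          simp only [eq_iff_iff]
          omega

lemma sorted_of_adj {l : List ℕ} (h : ∀ k, k + 1 < l.length → l.getD (k+1) 0 ≤ l.getD k 0) :
    l.Pairwise (· ≥ ·) := by
  induction l with
  | nil => exact List.Pairwise.nil
  | cons x t ih =>
      rw [List.pairwise_cons]
      constructor
      · intro b hb
        obtain ⟨k, hk, rfl⟩ := List.mem_iff_getElem.mp hb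
        have hget : (x :: t).getD (k+1) 0 = t[k] := by
          rw [List.getD_eq_getElem _ _ (by simpa using hk)]
          simp
        rw [← hget]
        clear hb hget
        induction k with
        | zero => exact h 0 (by simp; omega)
        | succ k ihk =>
            have h1 := h (k+1) (by simp at hk ⊢; omega)
            have h2 := ihk (by omega)
            omega
      · apply ih
        intro k hk
        have := h (k+1) (by simp; omega)
        simpa using this

lemma chain_step (n : ℕ) (lam mu : List ℕ) (hlam : IsPartition n lam) (hmu : IsPartition n mu)
    (hdom : Dominated lam mu) (hne : lam ≠ mu) :
    ∃ (nu : List ℕ) (p c : ℕ) (rest : Multiset ℕ),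
      IsPartition n nu ∧ Dominated lam nu ∧ Mval n nu < Mval n mu ∧ c + 2 ≤ p ∧
      (((↑mu : Multiset ℕ) = p ::ₘ c ::ₘ rest ∧ 0 < c) ∨
        ((↑mu : Multiset ℕ) = p ::ₘ rest ∧ c = 0)) ∧
      (↑nu : Multiset ℕ) = (p - 1) ::ₘ (c + 1) ::ₘ rest := by
  obtain ⟨hsl, hpl, hsuml⟩ := hlam
  obtain ⟨hsm, hpm, hsummu⟩ := hmu
  have hdom' : ∀ k, Sp lam k ≤ Sp mu k := hdom
  have hex : ∃ k, Sp lam k < Sp mu k := by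
    by_contra hc
    push_neg at hc
    apply hne
    apply eq_of_getD_eq lam mu hpl hpm
    intro k
    have h1 : Sp lam k = Sp mu k := le_antisymm (hdom' k) (hc k)
    have h2 : Sp lam (k+1) = Sp mu (k+1) := le_antisymm (hdom' _) (hc _)
    rw [Sp_succ, Sp_succ] at h2
    omega
  have hk00 : Nat.find hex ≠ 0 := by
    intro h
    have := Nat.find_spec hex
    rw [h] at this
    simp [Sp_zero] at this
  set i := Nat.find hex - 1 with hidef
  have hik0 : Nat.find hex = i + 1 := by omega
  have heqi : Sp lam i = Sp mu i := by
    have h1 := Nat.find_min hex (show i < Nat.find hex by omega)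
    exact le_antisymm (hdom' i) (by omega)
  have hstep : Sp lam (i+1) < Sp mu (i+1) := by
    rw [← hik0]; exact Nat.find_spec hex
  have hgi : lam.getD i 0 < mu.getD i 0 := by
    rw [Sp_succ, Sp_succ] at hstep
    omega
  have hilenlam : i < lam.length := by
    by_contra hcon
    push_neg at hcon
    have h1 : Sp lam (i+1) = n := by rw [Sp_of_length_le lam (by omega), hsuml]
    have h2 : Sp mu (i+1) ≤ n := by rw [← hsummu]; exact Sp_le_sum mu _
    omega
  have hli : 1 ≤ lam.getD i 0 := getD_pos hpl hilenlam
  set p := mu.getD i 0 with hpdef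
  have hp2 : 2 ≤ p := by omega
  have hilenmu : i < mu.length := by
    by_contra hcon
    push_neg at hcon
    have := getD_eq_zero_of_length_le (l := mu) hcon
    omega
  -- r : last index of the p-block
  have hexr : ∃ k, i < k ∧ mu.getD k 0 ≠ p :=
    ⟨mu.length, hilenmu, by rw [getD_eq_zero_of_length_le (le_refl _)]; omega⟩
  have hrf0 : Nat.find hexr ≠ 0 := by
    intro h
    have := (Nat.find_spec hexr).1
    omega
  set r := Nat.find hexr - 1 with hrdef
  have hrfi : Nat.find hexr = r + 1 := by omega
  have hir : i ≤ r := by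
    have := (Nat.find_spec hexr).1
    omega
  have hconst : ∀ k, i ≤ k → k ≤ r → mu.getD k 0 = p := by
    intro k h1 h2
    rcases Nat.eq_or_lt_of_le h1 with h3 | h3
    · rw [← h3]
    · have h4 := Nat.find_min hexr (m := k) (by omega)
      by_contra hc2
      exact h4 ⟨h3, hc2⟩
  have hgr : mu.getD r 0 = p := hconst r hir (le_refl _)
  have hgr1 : mu.getD (r+1) 0 ≠ p := by
    rw [← hrfi]; exact (Nat.find_spec hexr).2
  have hrlen : r < mu.length := by
    by_contra hc2
    push_neg at hc2
    have := getD_eq_zero_of_length_le (l := mu) hc2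
    omega
  -- strict inequality on [i+1, r+1]
  have SCa : ∀ k, i + 1 ≤ k → k ≤ r + 1 → Sp lam k < Sp mu k := by
    intro k
    induction k with
    | zero => omega
    | succ k ihk =>
        intro h1 h2
        rcases Nat.lt_or_ge k (i+1) with h3 | h3
        · rw [show k + 1 = i + 1 by omega]
          exact hstep
        · have hk := ihk (by omega) (by omega)
          rw [Sp_succ, Sp_succ]
          have e1 : lam.getD k 0 ≤ lam.getD i 0 := getD_antitone hsl (by omega)
          have e2 : mu.getD k 0 = p := hconst k (by omega) (by omega)
          omega
  -- jj : first return to equality after r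
  have hexj : ∃ k, r + 1 ≤ k ∧ Sp mu k ≤ Sp lam k := by
    refine ⟨r + 1 + lam.length + mu.length, by omega, ?_⟩
    rw [Sp_of_length_le mu (by omega), Sp_of_length_le lam (by omega), hsuml, hsummu]
  have hjjne : Nat.find hexj ≠ r + 1 := by
    intro h
    have h1 := (Nat.find_spec hexj).2
    rw [h] at h1
    have := SCa (r+1) (by omega) (le_refl _)
    omega
  have hjj0 : r + 1 ≤ Nat.find hexj := (Nat.find_spec hexj).1
  set j1 := Nat.find hexj - 1 with hj1def
  have hjj1 : Nat.find hexj = j1 + 1 := by omega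
  have hj1r : r + 1 ≤ j1 := by omega
  have SCb : ∀ k, r + 1 ≤ k → k ≤ j1 → Sp lam k < Sp mu k := by
    intro k h1 h2
    have h3 := Nat.find_min hexj (m := k) (by omega)
    by_contra hc2
    push_neg at hc2
    exact h3 ⟨h1, hc2⟩
  set c := mu.getD j1 0 with hcdef
  have hc2p : c + 2 ≤ p := by
    have h1 := (Nat.find_spec hexj).2
    rw [hjj1, Sp_succ, Sp_succ] at h1
    have h2 := SCb j1 hj1r (le_refl _)
    have h3 : lam.getD j1 0 ≤ lam.getD i 0 := getD_antitone hsl (by omega)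
    omega
  -- j' : first index with value c
  have hexj' : ∃ k, mu.getD k 0 = c := ⟨j1, rfl⟩
  set j' := Nat.find hexj' with hj'def
  have hj'spec : mu.getD j' 0 = c := Nat.find_spec hexj'
  have hj'le : j' ≤ j1 := Nat.find_min' hexj' rfl
  have hrj' : r < j' := by
    by_contra hc2
    push_neg at hc2
    have := getD_antitone hsm hc2
    omega
  have hgtj' : ∀ t, t < j' → c + 1 ≤ mu.getD t 0 := by
    intro t ht
    have h1 := Nat.find_min hexj' ht
    have h2 : mu.getD j' 0 ≤ mu.getD t 0 := getD_antitone hsm (by omega)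
    omega
  have hlenn : mu.length ≤ n := by rw [← hsummu]; exact length_le_sum hpm
  rcases Nat.eq_zero_or_pos c with hc0 | hc0
  · -- CASE 2 : c = 0, append a new row
    have hj1len : mu.length ≤ j1 := by
      by_contra hc2
      push_neg at hc2
      have := getD_pos hpm hc2
      omega
    set nu := (mu.set r (p-1)) ++ [1] with hnudef
    obtain ⟨rest, hrest1, hrest2⟩ := set_multiset mu r hrlen (p-1)
    have hnu_mult : (↑nu : Multiset ℕ) = (p-1) ::ₘ (0+1) ::ₘ rest := by
      rw [hnudef, snoc_multiset, hrest2, Multiset.cons_swap]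
    have hlen_nu : nu.length = mu.length + 1 := by simp [hnudef]
    have hgetnu : ∀ t, nu.getD t 0
        = if t = mu.length then 1 else if t = r then p - 1 else mu.getD t 0 := by
      intro t
      rw [hnudef, getD_snoc]
      simp only [List.length_set]
      by_cases h1 : t = mu.length
      · simp [h1]
      · rw [if_neg h1, if_neg h1, getD_set]
        by_cases h2 : t = r
        · simp [h2, hrlen]
        · simp [h2]
    have hSp_snoc : ∀ k, k ≤ mu.length → Sp nu k = Sp (mu.set r (p-1)) k := by
      intro k hk
      rw [hnudef]
      show ((mu.set r (p-1) ++ [1]).take k).sum = _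
      rw [List.take_append_of_le_length (by simpa using hk)]
      rfl
    have hSp1 : ∀ k, k ≤ r → Sp nu k = Sp mu k := by
      intro k hk
      rw [hSp_snoc k (by omega), Sp_set_of_le _ hk]
    have hSp2 : ∀ k, r < k → k ≤ mu.length → Sp nu k + 1 = Sp mu k := by
      intro k h1 h2
      have ha := Sp_set (l := mu) (i := r) (p-1) hrlen h1
      rw [hgr] at ha
      rw [hSp_snoc k h2]
      omega
    have hsumnu : nu.sum = n := by
      rw [hnudef, List.sum_append]
      have ha := Sp_set (l := mu) (i := r) (v := p-1) hrlen hrlen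
      rw [hgr, Sp_of_length_le mu (le_refl _), hsummu,
        Sp_of_length_le _ (by simp)] at ha
      simp only [List.sum_cons, List.sum_nil]
      omega
    have hSp3 : ∀ k, mu.length < k → Sp nu k = n := by
      intro k h1
      rw [Sp_of_length_le nu (by rw [hlen_nu]; omega), hsumnu]
    have hdomnu : Dominated lam nu := by
      intro k
      show Sp lam k ≤ Sp nu k
      rcases Nat.le_total k r with h1 | h1
      · rw [hSp1 k h1]; exact hdom' k
      · rcases Nat.lt_or_ge mu.length k with h2 | h2
        · rw [hSp3 k h2]
          rw [← hsuml]
          exact Sp_le_sum lam k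
        · rcases Nat.eq_or_lt_of_le h1 with h3 | h3
          · rw [← h3, hSp1 r (le_refl _)]; exact hdom' r
          · have h4 := SCb k (by omega) (by omega)
            have h5 := hSp2 k h3 h2
            rw [← h5] at h4
            exact Nat.lt_succ_iff.mp h4
    have hnule : ∀ k, Sp nu k ≤ Sp mu k := by
      intro k
      rcases Nat.le_total k r with h1 | h1
      · rw [hSp1 k h1]
      · rcases Nat.lt_or_ge mu.length k with h2 | h2
        · rw [hSp3 k h2, Sp_of_length_le mu (by omega), hsummu]
        · rcases Nat.eq_or_lt_of_le h1 with h3 | h3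
          · rw [← h3, hSp1 r (le_refl _)]
          · have h6 := hSp2 k h3 h2
            rw [← h6]
            exact Nat.le_succ _
    have hMval : Mval n nu < Mval n mu := by
      apply Finset.sum_lt_sum (fun j _ => hnule j)
      refine ⟨r+1, Finset.mem_range.mpr (by omega), ?_⟩
      have h6 := hSp2 (r+1) (by omega) (by omega)
      rw [← h6]
      exact Nat.lt_succ_self _
    have hpos_nu : ∀ x ∈ nu, 0 < x := by
      intro x hx
      have hx2 : x ∈ (↑nu : Multiset ℕ) := by exact_mod_cast hx
      rw [hnu_mult] at hx2
      rcases Multiset.mem_cons.mp hx2 with rfl | hx2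
      · omega
      rcases Multiset.mem_cons.mp hx2 with rfl | hx2
      · omega
      · have hx3 : x ∈ (↑mu : Multiset ℕ) := by
          rw [hrest1]
          exact Multiset.mem_cons_of_mem hx2
        exact hpm x (by exact_mod_cast hx3)
    have hsort_nu : nu.Pairwise (· ≥ ·) := by
      apply sorted_of_adj
      intro k hk
      rw [hlen_nu] at hk
      rw [hgetnu, hgetnu]
      by_cases e1 : k + 1 = mu.length
      · rw [if_pos e1, if_neg (show k ≠ mu.length by omega)]
        by_cases e2 : k = r
        · rw [if_pos e2]; omega
        · rw [if_neg e2]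
          exact getD_pos hpm (by omega)
      · rw [if_neg e1, if_neg (show k ≠ mu.length by omega)]
        by_cases e3 : k + 1 = r
        · rw [if_pos e3, if_neg (show k ≠ r by omega)]
          have := getD_antitone hsm (show k ≤ r by omega)
          omega
        · by_cases e4 : k = r
          · rw [if_neg e3, if_pos e4]
            have h5 := getD_antitone hsm (show r ≤ k+1 by omega)
            have h6 : mu.getD (k+1) 0 ≠ p := by
              rw [show k+1 = r+1 by omega]; exact hgr1
            rw [hgr] at h5
            omega
          · rw [if_neg e3, if_neg e4]
            exact getD_antitone hsm (by omega)
    refine ⟨nu, p, 0, rest, ⟨hsort_nu, hpos_nu, hsumnu⟩, hdomnu, hMval, by omega,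
      Or.inr ⟨?_, rfl⟩, hnu_mult⟩
    rw [hrest1, hgr]
  · -- CASE 1 : c > 0, move a box from row r to row j'
    have hj'len : j' < mu.length := by
      by_contra hc2
      push_neg at hc2
      have := getD_eq_zero_of_length_le (l := mu) hc2
      omega
    set nu := (mu.set r (p - 1)).set j' (c + 1) with hnudef
    obtain ⟨rest, hrest1, hrest2⟩ :=
      set_set_multiset mu r j' (by omega) hrlen hj'len (p-1) (c+1)
    have hlen_nu : nu.length = mu.length := by simp [hnudef]
    have hgetnu : ∀ t, nu.getD t 0
        = if t = j' then c + 1 else if t = r then p - 1 else mu.getD t 0 := by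
      intro t
      rw [hnudef, getD_set, getD_set]
      simp only [List.length_set]
      by_cases h1 : t = j'
      · simp [h1, hj'len]
      · rw [if_neg (by simp [h1]), if_neg h1]
        by_cases h2 : t = r
        · simp [h2, hrlen]
        · simp [h2]
    have hSp1 : ∀ k, k ≤ r → Sp nu k = Sp mu k := by
      intro k hk
      rw [hnudef, Sp_set_of_le _ (show k ≤ j' by omega), Sp_set_of_le _ hk]
    have hSp2 : ∀ k, r < k → k ≤ j' → Sp nu k + 1 = Sp mu k := by
      intro k h1 h2
      have ha := Sp_set (l := mu) (i := r) (p-1) hrlen h1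
      rw [hgr] at ha
      have hb : Sp nu k = Sp (mu.set r (p-1)) k := by
        rw [hnudef, Sp_set_of_le _ h2]
      omega
    have hgj'2 : (mu.set r (p-1)).getD j' 0 = c := by
      rw [getD_set, if_neg (by rintro ⟨h1, -⟩; omega)]
      exact hj'spec
    have hSp3 : ∀ k, j' < k → Sp nu k = Sp mu k := by
      intro k h1
      have ha := Sp_set (l := mu) (i := r) (p-1) hrlen (show r < k by omega)
      rw [hgr] at ha
      have hb := Sp_set (l := mu.set r (p-1)) (i := j') (c+1) (by simpa using hj'len) h1
      rw [hgj'2] at hb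
      rw [hnudef] at *
      omega
    have hdomnu : Dominated lam nu := by
      intro k
      show Sp lam k ≤ Sp nu k
      rcases Nat.le_total k r with h1 | h1
      · rw [hSp1 k h1]; exact hdom' k
      · rcases Nat.lt_or_ge j' k with h2 | h2
        · rw [hSp3 k h2]; exact hdom' k
        · rcases Nat.eq_or_lt_of_le h1 with h3 | h3
          · rw [← h3, hSp1 r (le_refl _)]; exact hdom' r
          · have h4 := SCb k (by omega) (by omega)
            have h5 := hSp2 k h3 h2
            rw [← h5] at h4
            exact Nat.lt_succ_iff.mp h4
    have hnule : ∀ k, Sp nu k ≤ Sp mu k := by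
      intro k
      rcases Nat.le_total k r with h1 | h1
      · rw [hSp1 k h1]
      · rcases Nat.lt_or_ge j' k with h2 | h2
        · rw [hSp3 k h2]
        · rcases Nat.eq_or_lt_of_le h1 with h3 | h3
          · rw [← h3, hSp1 r (le_refl _)]
          · have h6 := hSp2 k h3 h2
            rw [← h6]
            exact Nat.le_succ _
    have hMval : Mval n nu < Mval n mu := by
      apply Finset.sum_lt_sum (fun j _ => hnule j)
      refine ⟨r+1, Finset.mem_range.mpr (by omega), ?_⟩
      have h6 := hSp2 (r+1) (by omega) (by omega)
      rw [← h6]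
      exact Nat.lt_succ_self _
    have hsumnu : nu.sum = n := by
      have h1 : nu.sum = Sp nu mu.length := by
        rw [Sp_of_length_le nu (by rw [hlen_nu])]
      rw [h1, hSp3 mu.length (by omega), Sp_of_length_le mu (le_refl _), hsummu]
    have hpos_nu : ∀ x ∈ nu, 0 < x := by
      intro x hx
      have hx2 : x ∈ (↑nu : Multiset ℕ) := by exact_mod_cast hx
      rw [hrest2] at hx2
      rcases Multiset.mem_cons.mp hx2 with rfl | hx2
      · omega
      rcases Multiset.mem_cons.mp hx2 with rfl | hx2
      · omega
      · have hx3 : x ∈ (↑mu : Multiset ℕ) := by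
          rw [hrest1]
          exact Multiset.mem_cons_of_mem (Multiset.mem_cons_of_mem hx2)
        exact hpm x (by exact_mod_cast hx3)
    have hsort_nu : nu.Pairwise (· ≥ ·) := by
      apply sorted_of_adj
      intro k hk
      rw [hlen_nu] at hk
      rw [hgetnu, hgetnu]
      by_cases e1 : k + 1 = j'
      · rw [if_pos e1]
        by_cases e2 : k = r
        · rw [if_neg (show k ≠ j' by omega), if_pos e2]; omega
        · rw [if_neg (show k ≠ j' by omega), if_neg e2]
          exact hgtj' k (by omega)
      · by_cases e2 : k = j'
        · rw [if_pos e2, if_neg e1, if_neg (show k + 1 ≠ r by omega)]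
          have := getD_antitone hsm (show j' ≤ k+1 by omega)
          rw [hj'spec] at this
          omega
        · by_cases e3 : k + 1 = r
          · rw [if_neg e1, if_pos e3, if_neg e2, if_neg (show k ≠ r by omega)]
            have := getD_antitone hsm (show k ≤ r by omega)
            rw [hgr] at this
            omega
          · by_cases e4 : k = r
            · rw [if_neg e1, if_neg e3, if_neg e2, if_pos e4]
              have h5 := getD_antitone hsm (show r ≤ k+1 by omega)
              have h6 : mu.getD (k+1) 0 ≠ p := by
                rw [show k+1 = r+1 by omega]; exact hgr1
              rw [hgr] at h5
              omega
            · rw [if_neg e1, if_neg e3, if_neg e2, if_neg e4]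
              exact getD_antitone hsm (by omega)
    refine ⟨nu, p, c, rest, ⟨hsort_nu, hpos_nu, hsumnu⟩, hdomnu, hMval, hc2p,
      Or.inl ⟨?_, hc0⟩, hrest2⟩
    rw [hrest1, hgr, hj'spec]

lemma mem_zip_map {α β : Type*} {l : List α} {f : α → β} {pr : α × β} :
    pr ∈ l.zip (l.map f) ↔ ∃ s ∈ l, pr = (s, f s) := by
  induction l with
  | nil => simp
  | cons x t ih =>
      simp only [List.map_cons, List.zip_cons_cons, List.mem_cons, ih]
      constructor
      · rintro (rfl | ⟨s, hs, rfl⟩)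
        · exact ⟨x, Or.inl rfl, rfl⟩
        · exact ⟨s, Or.inr hs, rfl⟩
      · rintro ⟨s, rfl | hs, rfl⟩
        · exact Or.inl rfl
        · exact Or.inr ⟨s, hs, rfl⟩

lemma smul_young_eq_CSet {n : ℕ} (a : Equiv.Perm (Fin n)) (P : List (Finset (Fin n))) :
    a • (YoungSubgroup P : Set (Equiv.Perm (Fin n)))
      = CSet (P.zip (P.map (fun s => s.image ⇑a))) := by
  ext g
  rw [Set.mem_smul_set_iff_inv_smul_mem, smul_eq_mul]
  have hmem : ∀ h : Equiv.Perm (Fin n), h ∈ YoungSubgroup P ↔ ∀ s ∈ P, s.image ⇑h = s :=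
    fun h => Iff.rfl
  rw [SetLike.mem_coe, hmem]
  constructor
  · intro hg pr hpr
    rw [mem_zip_map] at hpr
    obtain ⟨s, hs, rfl⟩ := hpr
    have h1 := hg s hs
    have h2 : (⇑a) ∘ ⇑(a⁻¹ * g) = ⇑g := by funext x; simp
    show s.image ⇑g = s.image ⇑a
    calc s.image ⇑g = (s.image ⇑(a⁻¹ * g)).image ⇑a := by
          rw [Finset.image_image, h2]
      _ = s.image ⇑a := by rw [h1]
  · intro hg s hs
    have h1 : s.image ⇑g = s.image ⇑a :=
      hg (s, s.image ⇑a) (mem_zip_map.mpr ⟨s, hs, rfl⟩)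
    have h2 : ⇑(a⁻¹ * g) = ⇑a⁻¹ ∘ ⇑g := rfl
    rw [h2, ← Finset.image_image, h1, Finset.image_image]
    ext x
    simp

/-- If `λ ⊴ μ` then `W_μ ⊆ W_λ`. -/
theorem Wspace_mu_le_Wspace_lam (n : ℕ) (hn : 2 ≤ n) (lam mu : List ℕ)
    (hlam : IsPartition n lam) (hmu : IsPartition n mu) (hdom : Dominated lam mu) :
    Wspace n mu ≤ Wspace n lam := by
  classical
  suffices H : ∀ N : ℕ, ∀ m : List ℕ, Mval n m < N → IsPartition n m → Dominated lam m →
      Wspace n m ≤ Wspace n lam by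
    exact H (Mval n mu + 1) mu (Nat.lt_succ_self _) hmu hdom
  intro N
  induction N with
  | zero => intro m hM; exact absurd hM (Nat.not_lt_zero _)
  | succ N ih =>
      intro m hM hm hdm
      by_cases hEq : lam = m
      · rw [← hEq]
      · obtain ⟨nu, p, c, rest, hnu, hdomnu, hMv, hpc, hmucase, hnumult⟩ :=
          chain_step n lam m hlam hm hdm hEq
        have step : Wspace n m ≤ Wspace n nu := by
          apply Submodule.span_le.mpr
          rintro v ⟨a, P, hOSP, hPcard, rfl⟩
          rw [SetLike.mem_coe, smul_young_eq_CSet]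
          set Z0 := P.zip (P.map (fun s => s.image ⇑a)) with hZ0
          have hfst : Z0.map Prod.fst = P :=
            List.map_fst_zip (by simp)
          have hsnd : Z0.map Prod.snd = P.map (fun s => s.image ⇑a) :=
            List.map_snd_zip (by simp)
          have hall : ∀ pr ∈ Z0, pr.2 = pr.1.image ⇑a := by
            intro pr hpr
            obtain ⟨s, _, rfl⟩ := mem_zip_map.mp hpr
            rfl
          have hcards : (↑(Z0.map (fun pr => pr.1.card)) : Multiset ℕ) = (↑m : Multiset ℕ) := by
            have hmm : (Z0.map Prod.fst).map Finset.card = Z0.map (fun pr => pr.1.card) := by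
              rw [List.map_map]
              rfl
            rw [← hmm, hfst, hPcard]
          obtain ⟨hPd, hPne, hPuniv⟩ := hOSP
          have hcovZ : ∀ x : Fin n, ∃ pr ∈ Z0, x ∈ pr.1 := by
            intro x
            have hx : x ∈ P.foldr (· ∪ ·) ∅ := by rw [hPuniv]; exact Finset.mem_univ x
            obtain ⟨s, hs, hxs⟩ := mem_foldr_union.mp hx
            rw [← hfst] at hs
            obtain ⟨pr, hpr, heq⟩ := List.mem_map.mp hs
            exact ⟨pr, hpr, by rw [heq]; exact hxs⟩
          have hcovZ' : ∀ x : Fin n, ∃ pr ∈ Z0, x ∈ pr.2 := by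
            intro x
            obtain ⟨pr, hpr, hxs⟩ := hcovZ (a⁻¹ x)
            refine ⟨pr, hpr, ?_⟩
            rw [hall pr hpr]
            exact Finset.mem_image.mpr ⟨a⁻¹ x, hxs, by simp⟩
          have hdisjZ : (Z0.map Prod.fst).Pairwise Disjoint := by rw [hfst]; exact hPd
          have hdisjZ' : (Z0.map Prod.snd).Pairwise Disjoint := by
            rw [hsnd, List.pairwise_map]
            apply hPd.imp
            intro s t hd
            exact Finset.disjoint_image a.injective |>.mpr hd
          have hneZ : ∀ pr ∈ Z0, pr.1.Nonempty := by
            intro pr hpr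
            apply hPne
            rw [← hfst]
            exact List.mem_map_of_mem hpr
          rcases hmucase with ⟨hmu1, hcpos⟩ | ⟨hmu1, hc0⟩
          · obtain ⟨zA, Z1, hperm1, hfzA, hrest1⟩ :=
              extract_multiset (fun pr => pr.1.card) Z0 p (c ::ₘ rest) (by rw [hcards, hmu1])
            obtain ⟨zB, O, hperm2, hfzB, hrest2⟩ :=
              extract_multiset (fun pr => pr.1.card) Z1 c rest hrest1
            have hperm : Z0.Perm (zA :: zB :: O) := hperm1.trans (hperm2.cons zA)
            rw [CSet_perm hperm]
            have htr : ∀ pr ∈ (zA :: zB :: O), pr ∈ Z0 := fun pr hpr => hperm.mem_iff.mpr hpr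
            apply core_move nu zA.1 zA.2 zB.1 zB.2 O
            · exact (List.Perm.pairwise_iff (fun hd => Disjoint.symm hd)
                (hperm.map Prod.fst)).mp hdisjZ
            · intro x
              obtain ⟨pr, hpr, hxs⟩ := hcovZ x
              exact ⟨pr, hperm.mem_iff.mp hpr, hxs⟩
            · exact (List.Perm.pairwise_iff (fun hd => Disjoint.symm hd)
                (hperm.map Prod.snd)).mp hdisjZ'
            · intro x
              obtain ⟨pr, hpr, hxs⟩ := hcovZ' x
              exact ⟨pr, hperm.mem_iff.mp hpr, hxs⟩
            · intro pr hpr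
              exact hneZ pr (htr pr (List.mem_cons_of_mem _ (List.mem_cons_of_mem _ hpr)))
            · rw [hall zA (htr zA (List.mem_cons_self))]
              exact (Finset.card_image_of_injective _ a.injective).symm
            · rw [hfzA, hfzB]; omega
            · rw [hfzA, hfzB, hrest2, hnumult]
          · obtain ⟨zA, O, hperm1, hfzA, hrest1⟩ :=
              extract_multiset (fun pr => pr.1.card) Z0 p rest (by rw [hcards, hmu1])
            rw [CSet_perm hperm1]
            have htr : ∀ pr ∈ (zA :: O), pr ∈ Z0 := fun pr hpr => hperm1.mem_iff.mpr hpr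
            have hCeq : CSet (zA :: O)
                = CSet ((zA.1, zA.2) :: ((∅ : Finset (Fin n)), (∅ : Finset (Fin n))) :: O) := by
              ext g
              constructor
              · intro hg pr hpr
                rcases List.mem_cons.mp hpr with rfl | hpr
                · exact hg zA (List.mem_cons_self)
                rcases List.mem_cons.mp hpr with rfl | hpr
                · exact Finset.image_empty _
                · exact hg pr (List.mem_cons_of_mem _ hpr)
              · intro hg pr hpr
                rcases List.mem_cons.mp hpr with rfl | hpr
                · exact hg (pr.1, pr.2) (List.mem_cons_self)
                · exact hg pr (List.mem_cons_of_mem _ (List.mem_cons_of_mem _ hpr))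
            rw [hCeq]
            have hpairs : ((zA :: O).map Prod.fst).Pairwise Disjoint :=
              (List.Perm.pairwise_iff (fun hd => Disjoint.symm hd)
                (hperm1.map Prod.fst)).mp hdisjZ
            have hpairs' : ((zA :: O).map Prod.snd).Pairwise Disjoint :=
              (List.Perm.pairwise_iff (fun hd => Disjoint.symm hd)
                (hperm1.map Prod.snd)).mp hdisjZ'
            apply core_move nu zA.1 zA.2 ∅ ∅ O
            · show List.Pairwise Disjoint (zA.1 :: (∅ : Finset (Fin n)) :: O.map Prod.fst)
              have hpc2 : Disjoint zA.1 (∅ : Finset (Fin n)) ∧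
                  ∀ y ∈ O.map Prod.fst, Disjoint zA.1 y := by
                constructor
                · exact Finset.disjoint_empty_right _
                · exact fun y hy => (List.pairwise_cons.mp hpairs).1 y hy
              refine List.Pairwise.cons ?_ (List.Pairwise.cons ?_
                (List.pairwise_cons.mp hpairs).2)
              · intro y hy
                rcases List.mem_cons.mp hy with rfl | hy
                · exact hpc2.1
                · exact hpc2.2 y hy
              · intro y _
                exact Finset.disjoint_empty_left _
            · intro x
              obtain ⟨pr, hpr, hxs⟩ := hcovZ x
              rcases List.mem_cons.mp (hperm1.mem_iff.mp hpr) with rfl | hpr2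
              · exact ⟨(pr.1, pr.2), List.mem_cons_self, hxs⟩
              · exact ⟨pr, List.mem_cons_of_mem _ (List.mem_cons_of_mem _ hpr2), hxs⟩
            · show List.Pairwise Disjoint (zA.2 :: (∅ : Finset (Fin n)) :: O.map Prod.snd)
              refine List.Pairwise.cons ?_ (List.Pairwise.cons ?_
                (List.pairwise_cons.mp hpairs').2)
              · intro y hy
                rcases List.mem_cons.mp hy with rfl | hy
                · exact Finset.disjoint_empty_right _
                · exact (List.pairwise_cons.mp hpairs').1 y hy
              · intro y _
                exact Finset.disjoint_empty_left _
            · intro x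
              obtain ⟨pr, hpr, hxs⟩ := hcovZ' x
              rcases List.mem_cons.mp (hperm1.mem_iff.mp hpr) with rfl | hpr2
              · exact ⟨(pr.1, pr.2), List.mem_cons_self, hxs⟩
              · exact ⟨pr, List.mem_cons_of_mem _ (List.mem_cons_of_mem _ hpr2), hxs⟩
            · intro pr hpr
              exact hneZ pr (htr pr (List.mem_cons_of_mem _ hpr))
            · rw [hall zA (htr zA (List.mem_cons_self))]
              exact (Finset.card_image_of_injective _ a.injective).symm
            · rw [hfzA, Finset.card_empty]; omega
            · rw [hfzA, Finset.card_empty, hrest1]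
              rw [hc0] at hnumult
              exact hnumult
        exact le_trans step (ih nu (by omega) hnu hdomnu)
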